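/- The symmetrization H_{n,d} = Sym[ ∏_{i=1}^n z_i^{⌊id/n⌋-⌊(i-1)d/n⌋} / ∏_{i=1}^{n-1}(1 - z_{i+1}/(z_i q₂)) · ∏_{1≤i<j≤n} ζ(z_i/z_j) ] is a symmetric Laurent polynomial (i.e., all apparent poles at z_{i+1} = q₂ z_i and z_i = z_j cancel after symmetrization) with coefficients in ℤ[q₁^{±1}, q₂^{±1}], for all (n,d) ∈ ℕ × ℤ with n ≥ 1. -/

import Mathlib

/- Framework: we work inside the field FF of rational functions over ℤ in
countably many variables q₁, q₂, z₀, z₁, z₂, … (the fraction field of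
MvPolynomial ℕ ℤ).  A Laurent polynomial R(z₁,…,z_n) over ℤ[q₁^±,q₂^±] is
encoded by its finitely supported coefficient function
c : (Fin n → ℤ) →₀ FF (with values in the Laurent subring ℤ[q₁^±,q₂^±]),
and `evalC c w` is its value ∑_m c_m ∏ w_i^{m_i} at a point w.  Since the z_i
are algebraically independent, equalities of such expressions at the generic
point w = (z₀,…,z_{n-1}) are equalities of rational functions. -/

noncomputable section

abbrev FF : Type := FractionRing (MvPolynomial ℕ ℤ)

noncomputable def q₁ : FF := algebraMap (MvPolynomial ℕ ℤ) FF (MvPolynomial.X 0)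
noncomputable def q₂ : FF := algebraMap (MvPolynomial ℕ ℤ) FF (MvPolynomial.X 1)
/-- the generic variables z_i (also used as the variables x_i of the
specializations in Definition `SatisfiesDiv`) -/
noncomputable def zz (i : ℕ) : FF := algebraMap (MvPolynomial ℕ ℤ) FF (MvPolynomial.X (i + 2))
noncomputable def q₃ : FF := (q₁ * q₂)⁻¹

noncomputable def zeta (x : FF) : FF :=
  (1 - x * q₁) * (1 - x * q₂) * (1 - q₁ * q₂ / x) / (1 - x)

/-- the Laurent polynomial subring ℤ[q₁^{±1},q₂^{±1}] ⊆ FF -/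
noncomputable def Lq : Subring FF := Subring.closure {q₁, q₁⁻¹, q₂, q₂⁻¹}

/-- the Laurent polynomial subring ℤ[q₁^{±1},q₂^{±1}][x₁^{±1},…,x_k^{±1}] ⊆ FF,
where x_i := zz i -/
noncomputable def Lqx (k : ℕ) : Subring FF :=
  Subring.closure ({q₁, q₁⁻¹, q₂, q₂⁻¹} ∪ (Set.range fun i : Fin k => zz i)
    ∪ (Set.range fun i : Fin k => (zz i)⁻¹))

/-- value of the Laurent polynomial with coefficients c at the point w -/
noncomputable def evalC {n : ℕ} (c : (Fin n → ℤ) →₀ FF) (w : Fin n → FF) : FF :=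
  ∑ m ∈ c.support, c m * ∏ i, w i ^ (m i)

/-- the specialization point (x₁, x₁q₂, …, x₁q₂^{n₁-1}, …, x_k, …, x_kq₂^{n_k-1})
attached to a partition (n₁,…,n_k), with x_i := zz i -/
noncomputable def specTuple {n : ℕ} (k : ℕ) (nn : Fin k → ℕ) : Fin n → FF :=
  fun j => (((List.finRange k).flatMap fun i =>
    (List.range (nn i)).map fun s => zz i * q₂ ^ s).getD j 1)

/-- the divisor (eqn "divisible by") attached to a partition (n₁ ≥ … ≥ n_k) -/
noncomputable def divisor (k : ℕ) (nn : Fin k → ℕ) : FF :=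
  (∏ i : Fin k, ((1 - q₂) ^ (nn i) *
      ∏ s ∈ Finset.Icc 1 (nn i - 1), zeta (q₂ ^ s) ^ (nn i - s))) *
  ∏ i : Fin k, ∏ j ∈ Finset.univ.filter (fun j : Fin k => i < j),
    ((∏ a ∈ Finset.Icc (1 : ℤ) ((nn i : ℤ) - 1), ∏ b ∈ Finset.Icc (0 : ℤ) ((nn j : ℤ) - 1),
        (zz i * q₁ - zz j * q₂ ^ (b - a))) *
     (∏ a ∈ Finset.Icc (1 : ℤ) ((nn i : ℤ) - 1), ∏ b ∈ Finset.Icc (0 : ℤ) ((nn j : ℤ) - 1),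
        (zz j * q₁ - zz i * q₂ ^ (a - b - 1))))

/-- coefficients lie in ℤ[q₁^{±1},q₂^{±1}] -/
def HasLqCoeffs {n : ℕ} (c : (Fin n → ℤ) →₀ FF) : Prop := ∀ m ∈ c.support, c m ∈ Lq

/-- the Laurent polynomial is symmetric in z₁,…,z_n -/
def IsSymmC {n : ℕ} (c : (Fin n → ℤ) →₀ FF) : Prop :=
  ∀ σ : Equiv.Perm (Fin n), ∀ m : Fin n → ℤ, c (m ∘ σ) = c m

/-- the divisibility conditions of Definition "shuffle": for every partition
(n₁ ≥ … ≥ n_k) ⊢ n, the specialization is divisible by `divisor` in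
ℤ[q₁^{±1},q₂^{±1}][x₁^{±1},…,x_k^{±1}] -/
def SatisfiesDiv {n : ℕ} (c : (Fin n → ℤ) →₀ FF) : Prop :=
  ∀ (k : ℕ) (nn : Fin k → ℕ), (∀ i, 0 < nn i) → Antitone nn → (∑ i, nn i) = n →
    ∃ g ∈ Lqx k, evalC c (specTuple k nn) = divisor k nn * g

/-- membership in the integral shuffle algebra 𝒮 (in degree n) -/
def InS {n : ℕ} (c : (Fin n → ℤ) →₀ FF) : Prop :=
  HasLqCoeffs c ∧ IsSymmC c ∧ SatisfiesDiv c


/- STATEMENT 13: for n ≥ 1 and d ∈ ℤ, the symmetrization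
H_{n,d} = Sym[ ∏_i z_i^{⌊id/n⌋-⌊(i-1)d/n⌋} / ∏_{i=1}^{n-1}(1 - z_{i+1}/(z_iq₂))
              · ∏_{i<j} ζ(z_i/z_j) ]
(Sym = sum over all permutations of the variables) is a symmetric Laurent
polynomial with coefficients in ℤ[q₁^{±1},q₂^{±1}]: there is coefficient data
c with coefficients in ℤ[q₁^±,q₂^±], symmetric, whose value at the generic
point equals the symmetrized rational expression. -/

/-- the variables z_{σ(1)}, …, z_{σ(n)} (0-indexed), as a function on ℕ. -/
noncomputable def vv (n : ℕ) (σ : Equiv.Perm (Fin n)) (i : ℕ) : FF :=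
  if h : i < n then zz (σ ⟨i, h⟩) else 1

/-- the symmetrization defining H_{n,d}, as a rational function (an element of
the field FF, in the generic variables z₀,…,z_{n-1}). -/
noncomputable def symH (n : ℕ) (d : ℤ) : FF :=
  ∑ σ : Equiv.Perm (Fin n),
    (∏ i ∈ Finset.range n,
        vv n σ i ^ (Int.fdiv (((i : ℤ) + 1) * d) n - Int.fdiv ((i : ℤ) * d) n)) /
      (∏ i ∈ Finset.range (n - 1), (1 - vv n σ (i + 1) / (vv n σ i * q₂))) *
    ∏ i ∈ Finset.range n, ∏ j ∈ Finset.range n,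
      (if i < j then zeta (vv n σ i / vv n σ j) else 1)


/-! ### Auxiliary development -/

set_option maxHeartbeats 1000000
set_option synthInstance.maxHeartbeats 200000

namespace St13

open MvPolynomial Finset

/-! #### Nonzero facts in FF -/

lemma alg_inj : Function.Injective (algebraMap (MvPolynomial ℕ ℤ) FF) :=
  IsFractionRing.injective _ _

lemma ne_zero_of_eval {p : MvPolynomial ℕ ℤ} (f : ℕ → ℤ) (h : MvPolynomial.eval f p ≠ 0) :
    algebraMap (MvPolynomial ℕ ℤ) FF p ≠ 0 := by
  intro h0
  have : p = 0 := alg_inj (by simpa using h0)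
  exact h (by rw [this]; simp)

lemma zz_ne_zero (i : ℕ) : zz i ≠ 0 :=
  ne_zero_of_eval (fun _ => 1) (by simp)

lemma q2_ne_zero : q₂ ≠ 0 :=
  ne_zero_of_eval (fun _ => 1) (by simp [q₂])

lemma q1_ne_zero : q₁ ≠ 0 :=
  ne_zero_of_eval (fun _ => 1) (by simp [q₁])

lemma zz_sub_ne {i j : ℕ} (h : i ≠ j) : zz j - zz i ≠ 0 := by
  have : zz j - zz i = algebraMap (MvPolynomial ℕ ℤ)
      FF (MvPolynomial.X (j + 2) - MvPolynomial.X (i + 2)) := by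
    simp [zz, map_sub]
  rw [this]
  apply ne_zero_of_eval (fun k => if k = j + 2 then 1 else 0)
  simp [h, (by omega : i + 2 ≠ j + 2)]

lemma zzq2_sub_ne {i j : ℕ} (h : i ≠ j) : zz i * q₂ - zz j ≠ 0 := by
  have : zz i * q₂ - zz j = algebraMap (MvPolynomial ℕ ℤ)
      FF (MvPolynomial.X (i + 2) * MvPolynomial.X 1 - MvPolynomial.X (j + 2)) := by
    simp [zz, q₂, map_sub, map_mul]
  rw [this]
  apply ne_zero_of_eval (fun k => if k = j + 2 then 1 else 0)
  simp [(by omega : i + 2 ≠ j + 2)]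

/-! #### zeta in cleared form -/

lemma zeta_frac {a b : FF} (ha : a ≠ 0) (hb : b ≠ 0) (hab : b - a ≠ 0) :
    zeta (a / b) = (b - a * q₁) * (b - a * q₂) * (a - q₁ * q₂ * b) / (a * b * (b - a)) := by
  have hx : 1 - a / b ≠ 0 := by
    have : 1 - a / b = (b - a) / b := by field_simp
    rw [this]
    exact div_ne_zero hab hb
  unfold zeta
  rw [div_eq_div_iff hx (by exact mul_ne_zero (mul_ne_zero ha hb) hab)]
  field_simp

/-! #### Polynomial rings -/

abbrev R0 : Type := MvPolynomial (Fin 2) ℤ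
abbrev B (n : ℕ) : Type := MvPolynomial (Fin n) R0

def q1R : R0 := MvPolynomial.X 0
def q2R : R0 := MvPolynomial.X 1

noncomputable def phiq : R0 →+* FF :=
  eval₂Hom (Int.castRingHom FF) (fun i => if i = 0 then q₁ else q₂)

noncomputable def Phi (n : ℕ) : B n →+* FF :=
  eval₂Hom phiq (fun i => zz i)

@[simp] lemma Phi_X {n : ℕ} (i : Fin n) : Phi n (MvPolynomial.X i) = zz i := by
  simp [Phi]

@[simp] lemma Phi_C {n : ℕ} (r : R0) : Phi n (MvPolynomial.C r) = phiq r := by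
  simp [Phi]

@[simp] lemma phiq_q1 : phiq q1R = q₁ := by simp [phiq, q1R]

@[simp] lemma phiq_q2 : phiq q2R = q₂ := by simp [phiq, q2R]

/-- evaluation of `B n` into ℤ, sending everything to 1; used for torsion-freeness -/
noncomputable def evB (n : ℕ) : B n →+* ℤ :=
  eval₂Hom (eval₂Hom (RingHom.id ℤ) (fun _ => 1)) (fun _ => 1)

lemma two_ne_zero_B (n : ℕ) : (2 : B n) ≠ 0 := by
  intro h
  have h2 : ((2 : ℤ) : B n) = 0 := by exact_mod_cast h
  have : ((2 : ℤ) : ℤ) = 0 := by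
    have := congrArg (evB n) h2
    rwa [map_intCast, map_zero] at this
  omega

/-! #### The Vandermonde and its alternation -/

noncomputable def Van (n : ℕ) : B n :=
  ∏ i : Fin n, ∏ j ∈ Finset.Ioi i, (MvPolynomial.X j - MvPolynomial.X i)

lemma Phi_Van_ne_zero (n : ℕ) : Phi n (Van n) ≠ 0 := by
  rw [Van, map_prod]
  apply Finset.prod_ne_zero_iff.2
  intro i _
  rw [map_prod]
  apply Finset.prod_ne_zero_iff.2
  intro j hj
  rw [map_sub, Phi_X, Phi_X]
  refine zz_sub_ne ?_
  have : i < j := Finset.mem_Ioi.1 hj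
  omega

lemma Van_ne_zero (n : ℕ) : Van n ≠ 0 := by
  intro h
  exact Phi_Van_ne_zero n (by rw [h, map_zero])

lemma rename_Van {n : ℕ} (τ : Equiv.Perm (Fin n)) :
    MvPolynomial.rename τ (Van n) = ((Equiv.Perm.sign τ : ℤ) : B n) * Van n := by
  have hV : Van n = (Matrix.vandermonde fun i : Fin n => (MvPolynomial.X i : B n)).det :=
    (Matrix.det_vandermonde _).symm
  have hren : (MvPolynomial.rename (τ : Fin n → Fin n)).toRingHom.mapMatrix
      (Matrix.vandermonde fun i : Fin n => (MvPolynomial.X i : B n)) =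
      (Matrix.vandermonde fun i : Fin n => (MvPolynomial.X i : B n)).submatrix τ id := by
    ext i j
    simp [Matrix.vandermonde, Matrix.submatrix]
  calc MvPolynomial.rename τ (Van n)
      = (MvPolynomial.rename (τ : Fin n → Fin n)).toRingHom
          (Matrix.vandermonde fun i : Fin n => (MvPolynomial.X i : B n)).det := by
        rw [hV]; rfl
    _ = ((Matrix.vandermonde fun i : Fin n => (MvPolynomial.X i : B n)).submatrix τ id).det := by
        rw [RingHom.map_det, hren]
    _ = ((Equiv.Perm.sign τ : ℤ) : B n) *
          (Matrix.vandermonde fun i : Fin n => (MvPolynomial.X i : B n)).det := by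
        rw [Matrix.det_permute]
    _ = ((Equiv.Perm.sign τ : ℤ) : B n) * Van n := by rw [← hV]


/-! #### Substitution X i ↦ X j and divisibility by X j - X i -/

noncomputable def subst {n : ℕ} (i j : Fin n) : B n →+* B n :=
  eval₂Hom MvPolynomial.C (fun k => if k = i then MvPolynomial.X j else MvPolynomial.X k)

@[simp] lemma subst_C {n : ℕ} (i j : Fin n) (r : R0) :
    subst i j (MvPolynomial.C r) = MvPolynomial.C r := by simp [subst]

lemma subst_X {n : ℕ} (i j k : Fin n) :
    subst i j (MvPolynomial.X k) =
      if k = i then MvPolynomial.X j else MvPolynomial.X k := by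
  simp [subst]

lemma subst_dvd {n : ℕ} (i j : Fin n) (P : B n) :
    (MvPolynomial.X j - MvPolynomial.X i : B n) ∣ (P - subst i j P) := by
  induction P using MvPolynomial.induction_on with
  | C a => simp
  | add p q hp hq =>
    have : p + q - subst i j (p + q) = (p - subst i j p) + (q - subst i j q) := by
      rw [map_add]; ring
    rw [this]; exact dvd_add hp hq
  | mul_X p k hp =>
    have hexp : p * MvPolynomial.X k - subst i j (p * MvPolynomial.X k) =
        (p - subst i j p) * MvPolynomial.X k +
          subst i j p * (MvPolynomial.X k - subst i j (MvPolynomial.X k)) := by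
      rw [map_mul]; ring
    rw [hexp]
    refine dvd_add (hp.mul_right _) (Dvd.dvd.mul_left ?_ _)
    rcases eq_or_ne k i with rfl | hk
    · rw [subst_X, if_pos rfl]
      exact dvd_sub_comm.mp dvd_rfl
    · rw [subst_X, if_neg hk, sub_self]
      exact dvd_zero _

lemma X_sub_X_ne_zero {n : ℕ} {a b : Fin n} (h : a ≠ b) :
    (MvPolynomial.X a - MvPolynomial.X b : B n) ≠ 0 := by
  intro h0
  exact h (MvPolynomial.X_injective (sub_eq_zero.1 h0))

lemma subst_X_sub {n : ℕ} {i j : Fin n} (h : j ≠ i) :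
    subst i j (MvPolynomial.X j - MvPolynomial.X i) = 0 := by
  rw [map_sub, subst_X, subst_X, if_neg h, if_pos rfl, sub_self]

lemma prime_X_sub {n : ℕ} {i j : Fin n} (h : i ≠ j) :
    Prime (MvPolynomial.X j - MvPolynomial.X i : B n) := by
  have hne : (MvPolynomial.X j - MvPolynomial.X i : B n) ≠ 0 := X_sub_X_ne_zero h.symm
  rw [← Ideal.span_singleton_prime hne]
  have hker : Ideal.span {(MvPolynomial.X j - MvPolynomial.X i : B n)} =
      RingHom.ker (subst i j) := by
    ext P
    rw [Ideal.mem_span_singleton, RingHom.mem_ker]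
    constructor
    · rintro ⟨c, rfl⟩
      rw [map_mul, subst_X_sub h.symm, zero_mul]
    · intro h0
      have := subst_dvd i j P
      rwa [h0, sub_zero] at this
  rw [hker]
  exact RingHom.ker_isPrime _

lemma not_dvd_X_sub {n : ℕ} {i j k l : Fin n} (hij : i < j) (hkl : k < l)
    (hne : i ≠ k ∨ j ≠ l) :
    ¬ ((MvPolynomial.X j - MvPolynomial.X i : B n) ∣
        (MvPolynomial.X l - MvPolynomial.X k)) := by
  rintro ⟨c, hc⟩
  have h0 : subst i j (MvPolynomial.X l - MvPolynomial.X k) = 0 := by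
    rw [hc, map_mul, subst_X_sub (Fin.ne_of_gt hij), zero_mul]
  rw [map_sub, subst_X, subst_X] at h0
  by_cases hl : l = i
  · have hk : k ≠ i := fun h => (Fin.ne_of_lt hkl) (h.trans hl.symm)
    rw [if_pos hl, if_neg hk] at h0
    have hkj : k = j := (MvPolynomial.X_injective (sub_eq_zero.1 h0)).symm
    have : k < j := lt_of_lt_of_le (hl ▸ hkl) (le_of_lt hij)
    exact (Fin.ne_of_lt this) hkj
  · by_cases hk : k = i
    · rw [if_neg hl, if_pos hk] at h0
      have hlj : l = j := MvPolynomial.X_injective (sub_eq_zero.1 h0)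
      rcases hne with h | h
      · exact h hk.symm
      · exact h hlj.symm
    · rw [if_neg hl, if_neg hk] at h0
      exact (Fin.ne_of_gt hkl) (MvPolynomial.X_injective (sub_eq_zero.1 h0))

lemma prod_primes_dvd' {α : Type*} [CommMonoidWithZero α] {ι : Type*} [DecidableEq ι]
    (s : Finset ι) (f : ι → α) :
    ∀ G : α, (∀ a ∈ s, Prime (f a)) → (∀ a ∈ s, f a ∣ G) →
    (∀ a ∈ s, ∀ b ∈ s, a ≠ b → ¬ f a ∣ f b) →
    (∏ a ∈ s, f a) ∣ G := by
  induction s using Finset.induction_on with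
  | empty => intro G _ _ _; simpa using one_dvd G
  | @insert a s ha ih =>
    intro G hp hd hnd
    obtain ⟨G', rfl⟩ := hd a (Finset.mem_insert_self a s)
    rw [Finset.prod_insert ha]
    refine mul_dvd_mul_left _ (ih G' (fun b hb => hp b (Finset.mem_insert_of_mem hb))
      (fun b hb => ?_) (fun b hb c hc hbc => hnd b (Finset.mem_insert_of_mem hb) c
        (Finset.mem_insert_of_mem hc) hbc))
    have hdvd : f b ∣ f a * G' := hd b (Finset.mem_insert_of_mem hb)
    have hnb : ¬ f b ∣ f a := by
      apply hnd b (Finset.mem_insert_of_mem hb) a (Finset.mem_insert_self a s)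
      intro h; exact ha (h ▸ hb)
    exact ((hp b (Finset.mem_insert_of_mem hb)).2.2 _ _ hdvd).resolve_left hnb


/-! #### Exponents -/

def mex (n : ℕ) (d : ℤ) (i : ℕ) : ℤ :=
  Int.fdiv (((i : ℤ) + 1) * d) n - Int.fdiv ((i : ℤ) * d) n

def MM (n : ℕ) (d : ℤ) : ℕ := d.natAbs + n

def eex (n : ℕ) (d : ℤ) (i : ℕ) : ℕ := (mex n d i + MM n d).toNat

lemma fdiv_superadd {a b : ℤ} {n : ℕ} (hn : 0 < n) :
    Int.fdiv a n + Int.fdiv b n ≤ Int.fdiv (a + b) n := by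
  rw [Int.fdiv_eq_ediv_of_nonneg a (by positivity), Int.fdiv_eq_ediv_of_nonneg b (by positivity),
    Int.fdiv_eq_ediv_of_nonneg (a + b) (by positivity)]
  have hn' : (0 : ℤ) < n := by exact_mod_cast hn
  rw [Int.le_ediv_iff_mul_le hn']
  have h1 : a / (n : ℤ) * n ≤ a := Int.ediv_mul_le a (by positivity)
  have h2 : b / (n : ℤ) * n ≤ b := Int.ediv_mul_le b (by positivity)
  nlinarith

lemma fdiv_ge {d : ℤ} {n : ℕ} (hn : 0 < n) : -(d.natAbs : ℤ) ≤ Int.fdiv d n := by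
  rw [Int.fdiv_eq_ediv_of_nonneg d (by positivity)]
  have hn' : (0 : ℤ) < n := by exact_mod_cast hn
  rw [Int.le_ediv_iff_mul_le hn']
  have h1 : -(d.natAbs : ℤ) ≤ d := by
    rcases Int.natAbs_eq d with h | h <;> omega
  have h2 : -(d.natAbs : ℤ) * n ≤ -(d.natAbs : ℤ) * 1 := by
    apply mul_le_mul_of_nonpos_left _ (by simp)
    exact_mod_cast hn
  omega

lemma mex_bound {n : ℕ} (hn : 0 < n) (d : ℤ) (i : ℕ) :
    0 ≤ mex n d i + MM n d := by
  have h1 : Int.fdiv ((i : ℤ) * d) n + Int.fdiv d n ≤ Int.fdiv (((i : ℤ) + 1) * d) n := by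
    have : ((i : ℤ) + 1) * d = (i : ℤ) * d + d := by ring
    rw [this]
    exact fdiv_superadd hn
  have h2 := fdiv_ge (d := d) hn
  have h3 : (MM n d : ℤ) = (d.natAbs : ℤ) + n := by simp [MM]
  have hn' : (0 : ℤ) < n := by exact_mod_cast hn
  unfold mex
  omega

lemma eex_cast {n : ℕ} (hn : 0 < n) (d : ℤ) (i : ℕ) :
    (eex n d i : ℤ) = mex n d i + MM n d := by
  rw [eex, Int.toNat_of_nonneg (mex_bound hn d i)]

/-! #### The numerator polynomials and the alternating sum -/

noncomputable def pairP {n : ℕ} (σ : Equiv.Perm (Fin n)) (i j : Fin n) : B n :=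
  (MvPolynomial.X (σ j) - MvPolynomial.C q1R * MvPolynomial.X (σ i)) *
  (MvPolynomial.X (σ i) - MvPolynomial.C (q1R * q2R) * MvPolynomial.X (σ j)) *
  (if (j : ℕ) = (i : ℕ) + 1 then 1
   else (MvPolynomial.X (σ j) - MvPolynomial.C q2R * MvPolynomial.X (σ i)))

noncomputable def numer (n : ℕ) (d : ℤ) (σ : Equiv.Perm (Fin n)) : B n :=
  (∏ i ∈ Finset.univ.filter (fun i : Fin n => (i : ℕ) < n - 1), MvPolynomial.X (σ i)) *
  (∏ i : Fin n, MvPolynomial.X (σ i) ^ eex n d (i : ℕ)) *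
  ∏ i : Fin n, ∏ j ∈ Finset.Ioi i, pairP σ i j

lemma rename_pairP {n : ℕ} (τ σ : Equiv.Perm (Fin n)) (i j : Fin n) :
    MvPolynomial.rename τ (pairP σ i j) = pairP (τ * σ) i j := by
  unfold pairP
  rw [map_mul, map_mul, map_sub, map_sub, apply_ite (MvPolynomial.rename (τ : Fin n → Fin n)),
    map_sub]
  simp [Equiv.Perm.mul_apply]

lemma rename_numer {n : ℕ} (d : ℤ) (τ σ : Equiv.Perm (Fin n)) :
    MvPolynomial.rename τ (numer n d σ) = numer n d (τ * σ) := by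
  unfold numer
  rw [map_mul, map_mul, map_prod, map_prod, map_prod]
  congr 1
  · congr 1
    · exact Finset.prod_congr rfl fun i _ => by simp [Equiv.Perm.mul_apply]
    · exact Finset.prod_congr rfl fun i _ => by
        rw [map_pow, MvPolynomial.rename_X]; rfl
  · exact Finset.prod_congr rfl fun i _ => by
      rw [map_prod]
      exact Finset.prod_congr rfl fun j _ => rename_pairP τ σ i j

noncomputable def GG (n : ℕ) (d : ℤ) : B n :=
  ∑ σ : Equiv.Perm (Fin n), ((Equiv.Perm.sign σ : ℤ) : B n) * numer n d σ

lemma rename_GG {n : ℕ} (d : ℤ) (τ : Equiv.Perm (Fin n)) :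
    MvPolynomial.rename τ (GG n d) = ((Equiv.Perm.sign τ : ℤ) : B n) * GG n d := by
  unfold GG
  rw [map_sum, Finset.mul_sum]
  have lhs_eq : ∀ σ : Equiv.Perm (Fin n),
      MvPolynomial.rename τ (((Equiv.Perm.sign σ : ℤ) : B n) * numer n d σ) =
      ((Equiv.Perm.sign τ : ℤ) : B n) *
        (((Equiv.Perm.sign (τ * σ) : ℤ) : B n) * numer n d (τ * σ)) := by
    intro σ
    rw [map_mul, map_intCast, rename_numer, ← mul_assoc]
    congr 2
    have : (Equiv.Perm.sign τ) * (Equiv.Perm.sign (τ * σ)) = Equiv.Perm.sign σ := by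
      rw [map_mul]
      rcases Int.units_eq_one_or (Equiv.Perm.sign τ) with h | h <;> simp [h]
    rw [← this]
    push_cast
    ring
  rw [Finset.sum_congr rfl fun σ _ => lhs_eq σ]
  exact Equiv.sum_comp (Equiv.mulLeft τ)
    (fun ρ => ((Equiv.Perm.sign τ : ℤ) : B n) * (((Equiv.Perm.sign ρ : ℤ) : B n) * numer n d ρ))

lemma subst_rename_swap {n : ℕ} {i j : Fin n} (P : B n) :
    subst i j (MvPolynomial.rename (Equiv.swap i j) P) = subst i j P := by
  have : (subst i j).comp (MvPolynomial.rename
      ((Equiv.swap i j : Equiv.Perm (Fin n)) : Fin n → Fin n)).toRingHom = subst i j := by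
    apply MvPolynomial.ringHom_ext
    · intro r
      simp
    · intro k
      rw [RingHom.comp_apply]
      have hrn : (MvPolynomial.rename ((Equiv.swap i j : Equiv.Perm (Fin n)) :
          Fin n → Fin n)).toRingHom (MvPolynomial.X k : B n) =
          MvPolynomial.X (Equiv.swap i j k) := by
        simp
      rw [hrn]
      by_cases hk : k = i
      · subst hk
        rw [Equiv.swap_apply_left, subst_X, subst_X, if_pos rfl]
        split_ifs <;> rfl
      · by_cases hkj : k = j
        · subst hkj
          rw [Equiv.swap_apply_right, subst_X, subst_X, if_pos rfl]
          split_ifs <;> rfl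
        · rw [Equiv.swap_apply_of_ne_of_ne hk hkj]
  exact DFunLike.congr_fun this P

lemma subst_GG {n : ℕ} (d : ℤ) {i j : Fin n} (hij : i ≠ j) :
    subst i j (GG n d) = 0 := by
  have h1 : subst i j (MvPolynomial.rename (Equiv.swap i j) (GG n d)) = subst i j (GG n d) :=
    subst_rename_swap _
  rw [rename_GG, Equiv.Perm.sign_swap hij, map_mul] at h1
  have h2 : subst i j (((-1 : ℤˣ) : ℤ) : B n) = -1 := by
    push_cast
    rw [map_neg, map_one]
  rw [h2] at h1
  have h3 : (2 : B n) * subst i j (GG n d) = 0 := by linear_combination - h1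
  rcases mul_eq_zero.1 h3 with h | h
  · exact absurd h (two_ne_zero_B n)
  · exact h

lemma Van_dvd_GG {n : ℕ} (d : ℤ) : Van n ∣ GG n d := by
  rw [Van, Finset.prod_sigma' Finset.univ (fun i : Fin n => Finset.Ioi i)
    (fun i j => (MvPolynomial.X j - MvPolynomial.X i : B n))]
  apply prod_primes_dvd'
  · rintro ⟨a, b⟩ hab
    rw [Finset.mem_sigma] at hab
    exact prime_X_sub (Fin.ne_of_lt (Finset.mem_Ioi.1 hab.2))
  · rintro ⟨a, b⟩ hab
    have h0 := subst_GG d (i := a) (j := b) (Fin.ne_of_lt (Finset.mem_Ioi.1 (Finset.mem_sigma.1 hab).2))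
    have := subst_dvd a b (GG n d)
    rwa [h0, sub_zero] at this
  · rintro ⟨a, b⟩ hab ⟨a', b'⟩ hab' hne
    rw [Finset.mem_sigma, Finset.mem_Ioi] at hab hab'
    apply not_dvd_X_sub hab.2 hab'.2
    by_contra hcon
    push_neg at hcon
    exact hne (by rw [Sigma.mk.inj_iff]; exact ⟨hcon.1, heq_of_eq hcon.2⟩)


/-! #### The quotient polynomial and its symmetry -/

noncomputable def hpoly (n : ℕ) (d : ℤ) : B n := (Van_dvd_GG (n := n) d).choose

lemma GG_eq_Van_mul (n : ℕ) (d : ℤ) : GG n d = Van n * hpoly n d :=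
  (Van_dvd_GG (n := n) d).choose_spec

lemma sign_cast_ne_zero {n : ℕ} (τ : Equiv.Perm (Fin n)) :
    ((Equiv.Perm.sign τ : ℤ) : B n) ≠ 0 := by
  rcases Int.units_eq_one_or (Equiv.Perm.sign τ) with h | h <;> rw [h] <;> simp

lemma rename_hpoly {n : ℕ} (d : ℤ) (τ : Equiv.Perm (Fin n)) :
    MvPolynomial.rename τ (hpoly n d) = hpoly n d := by
  have h := rename_GG (n := n) d τ
  rw [GG_eq_Van_mul] at h
  rw [map_mul, rename_Van, mul_assoc] at h
  have h' := mul_left_cancel₀ (sign_cast_ne_zero τ) h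
  exact mul_left_cancel₀ (Van_ne_zero n) h'
  
/-! #### The AddMonoidAlgebra layer -/

abbrev AMA (n : ℕ) : Type := AddMonoidAlgebra FF (Fin n → ℤ)

noncomputable def gmon (n : ℕ) : Multiplicative (Fin n → ℤ) →* FF where
  toFun m := ∏ i : Fin n, zz i ^ (Multiplicative.toAdd m i)
  map_one' := by
    simp
  map_mul' x y := by
    show (∏ i : Fin n, zz i ^ (Multiplicative.toAdd (x * y) i)) =
      (∏ i : Fin n, zz i ^ (Multiplicative.toAdd x i)) *
        ∏ i : Fin n, zz i ^ (Multiplicative.toAdd y i)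
    rw [← Finset.prod_mul_distrib]
    refine Finset.prod_congr rfl fun i _ => ?_
    have h : Multiplicative.toAdd (x * y) i = Multiplicative.toAdd x i +
        Multiplicative.toAdd y i := rfl
    rw [h, zpow_add₀ (zz_ne_zero i)]

noncomputable def EE (n : ℕ) : AMA n →+* FF :=
  AddMonoidAlgebra.liftNCRingHom (RingHom.id FF) (gmon n) (fun _ _ => Commute.all _ _)

lemma EE_single (n : ℕ) (a : Fin n → ℤ) (r : FF) :
    EE n (AddMonoidAlgebra.single a r) = r * ∏ i : Fin n, zz i ^ (a i) :=
  AddMonoidAlgebra.liftNC_single _ _ _ _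

lemma evalC_eq_EE {n : ℕ} (c : (Fin n → ℤ) →₀ FF) :
    evalC c (fun i => zz i) = EE n (AddMonoidAlgebra.ofCoeff c) := by
  induction c using Finsupp.induction_linear with
  | zero => simp [evalC]
  | add f g hf hg =>
    have hsum : ∀ u : (Fin n → ℤ) →₀ FF,
        evalC u (fun i => zz i) = u.sum fun m v => v * ∏ i : Fin n, zz i ^ (m i) := by
      intro u
      rfl
    rw [hsum] at hf hg ⊢
    rw [AddMonoidAlgebra.ofCoeff_add, map_add, ← hf, ← hg]
    apply Finsupp.sum_add_index
    · intro a _; simp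
    · intro a _ b₁ b₂; rw [add_mul]
  | single a b =>
    have : evalC (Finsupp.single a b) (fun i => zz i) =
        (Finsupp.single a b).sum fun m v => v * ∏ i : Fin n, zz i ^ (m i) := rfl
    rw [this, Finsupp.sum_single_index (by simp), AddMonoidAlgebra.ofCoeff_single, EE_single]

/-! #### coefficients in Lq -/

lemma q1_mem_Lq : q₁ ∈ Lq := Subring.subset_closure (by simp)
lemma q2_mem_Lq : q₂ ∈ Lq := Subring.subset_closure (by simp)

noncomputable def Lcoef (n : ℕ) : Subring (AMA n) where
  carrier := {f | ∀ m, f.coeff m ∈ Lq}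
  zero_mem' := by
    intro m
    simp only [AddMonoidAlgebra.coeff_zero, Finsupp.coe_zero, Pi.zero_apply]
    exact zero_mem Lq
  one_mem' := by
    intro m
    rw [AddMonoidAlgebra.one_def]
    show (Finsupp.single 0 (1:FF)) m ∈ Lq
    rw [Finsupp.single_apply]
    split_ifs
    · exact one_mem Lq
    · exact zero_mem Lq
  add_mem' := by
    intro a b ha hb m
    rw [AddMonoidAlgebra.coeff_add, Finsupp.add_apply]
    exact add_mem (ha m) (hb m)
  neg_mem' := by
    intro a ha m
    rw [AddMonoidAlgebra.coeff_neg, Finsupp.neg_apply]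
    exact neg_mem (ha m)
  mul_mem' := by
    intro a b ha hb m
    rw [AddMonoidAlgebra.coeff_mul]
    unfold Finsupp.sum
    refine sum_mem fun a₁ _ => sum_mem fun a₂ _ => ?_
    simp only []
    split_ifs
    · exact mul_mem (ha a₁) (hb a₂)
    · exact zero_mem Lq

noncomputable def phiqL : R0 →+* Lq :=
  eval₂Hom (Int.castRingHom Lq)
    (fun i => if i = 0 then ⟨q₁, q1_mem_Lq⟩ else ⟨q₂, q2_mem_Lq⟩)

lemma coe_phiqL (r : R0) : ((phiqL r : Lq) : FF) = phiq r := by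
  have : (Lq.subtype).comp phiqL = phiq := by
    apply MvPolynomial.ringHom_ext
    · intro z
      simp [phiqL, phiq]
    · intro i
      by_cases h : i = 0 <;> simp [phiqL, phiq, h]
  exact DFunLike.congr_fun this r

noncomputable def psi (n : ℕ) : B n →+* AMA n :=
  eval₂Hom ((AddMonoidAlgebra.singleZeroRingHom).comp ((Lq).subtype.comp phiqL))
    (fun i => AddMonoidAlgebra.single (Pi.single i (1 : ℤ)) 1)

lemma psi_C (n : ℕ) (r : R0) :
    psi n (MvPolynomial.C r) = AddMonoidAlgebra.single 0 ((phiqL r : Lq) : FF) := by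
  simp [psi]

lemma psi_X (n : ℕ) (i : Fin n) :
    psi n (MvPolynomial.X i) = AddMonoidAlgebra.single (Pi.single i (1 : ℤ)) 1 := by
  simp [psi]

lemma psi_mem_Lcoef {n : ℕ} (P : B n) : psi n P ∈ Lcoef n := by
  induction P using MvPolynomial.induction_on with
  | C r =>
    rw [psi_C]
    intro m
    show (Finsupp.single 0 ((phiqL r : Lq) : FF)) m ∈ Lq
    rw [Finsupp.single_apply]
    split_ifs
    · exact SetLike.coe_mem _
    · exact zero_mem Lq
  | add p q hp hq =>
    rw [map_add]
    exact add_mem hp hq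
  | mul_X p k hp =>
    rw [map_mul, psi_X]
    refine mul_mem hp ?_
    intro m
    show (Finsupp.single (Pi.single k (1:ℤ)) (1:FF)) m ∈ Lq
    rw [Finsupp.single_apply]
    split_ifs
    · exact one_mem Lq
    · exact zero_mem Lq

lemma EE_psi_eq_Phi {n : ℕ} (P : B n) : EE n (psi n P) = Phi n P := by
  have hcomp : (EE n).comp (psi n) = Phi n := by
    apply MvPolynomial.ringHom_ext
    · intro r
      rw [RingHom.comp_apply, psi_C, EE_single, Phi_C, coe_phiqL]
      simp
    · intro i
      rw [RingHom.comp_apply, psi_X, EE_single, Phi_X, one_mul]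
      rw [Finset.prod_eq_single_of_mem i (Finset.mem_univ i)]
      · rw [Pi.single_eq_same, zpow_one]
      · intro b _ hbi
        rw [Pi.single_eq_of_ne hbi, zpow_zero]
  exact DFunLike.congr_fun hcomp P

/-! #### permutation action on coefficients -/

noncomputable def permEquiv (n : ℕ) (τ : Equiv.Perm (Fin n)) :
    (Fin n → ℤ) ≃ (Fin n → ℤ) := Equiv.arrowCongr τ (Equiv.refl ℤ)

noncomputable def permAdd (n : ℕ) (τ : Equiv.Perm (Fin n)) :
    (Fin n → ℤ) →+ (Fin n → ℤ) where
  toFun m := m ∘ ⇑τ⁻¹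
  map_zero' := rfl
  map_add' _ _ := rfl

lemma permAdd_coe (n : ℕ) (τ : Equiv.Perm (Fin n)) :
    ⇑(permAdd n τ) = ⇑(permEquiv n τ) := by
  funext m
  rfl

noncomputable def permHom (n : ℕ) (τ : Equiv.Perm (Fin n)) : AMA n →+* AMA n :=
  AddMonoidAlgebra.mapDomainRingHom FF (permAdd n τ)

lemma permHom_apply {n : ℕ} (τ : Equiv.Perm (Fin n)) (c : AMA n) (m : Fin n → ℤ) :
    (permHom n τ c).coeff m = c.coeff (m ∘ ⇑τ) := by
  show (Finsupp.mapDomain (⇑(permAdd n τ)) c.coeff) m = c.coeff (m ∘ ⇑τ)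
  rw [permAdd_coe, Finsupp.mapDomain_equiv_apply]
  rfl

lemma permHom_single {n : ℕ} (τ : Equiv.Perm (Fin n)) (a : Fin n → ℤ) (r : FF) :
    permHom n τ (AddMonoidAlgebra.single a r) =
      AddMonoidAlgebra.single (a ∘ ⇑τ⁻¹) r := by
  show AddMonoidAlgebra.ofCoeff (Finsupp.mapDomain (⇑(permAdd n τ)) (Finsupp.single a r)) =
    AddMonoidAlgebra.ofCoeff (Finsupp.single (a ∘ ⇑τ⁻¹) r)
  rw [Finsupp.mapDomain_single]
  rfl

lemma permHom_psi {n : ℕ} (τ : Equiv.Perm (Fin n)) (P : B n) :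
    permHom n τ (psi n P) = psi n (MvPolynomial.rename τ P) := by
  have hcomp : (permHom n τ).comp (psi n) =
      (psi n).comp (MvPolynomial.rename (⇑τ)).toRingHom := by
    apply MvPolynomial.ringHom_ext
    · intro r
      rw [RingHom.comp_apply, RingHom.comp_apply, psi_C, permHom_single]
      have : (MvPolynomial.rename (⇑τ)).toRingHom (MvPolynomial.C r : B n) =
          MvPolynomial.C r := by simp
      rw [this, psi_C]
      rfl
    · intro i
      rw [RingHom.comp_apply, RingHom.comp_apply, psi_X, permHom_single]
      have : (MvPolynomial.rename (⇑τ)).toRingHom (MvPolynomial.X i : B n) =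
          MvPolynomial.X (τ i) := by simp
      rw [this, psi_X]
      congr 1
      funext j
      simp only [Function.comp_apply]
      by_cases h : j = τ i
      · rw [h, Pi.single_eq_same, (by simp : τ⁻¹ (τ i) = i), Pi.single_eq_same]
      · rw [Pi.single_eq_of_ne h, Pi.single_eq_of_ne]
        intro hc
        exact h (by rw [← hc]; exact (by simp : τ (τ⁻¹ j) = j).symm)
  exact DFunLike.congr_fun hcomp P

/-! #### Analytic lemmas: rewriting one term of the symmetrization -/

section Analytic

variable {n : ℕ}

lemma vv_nat (σ : Equiv.Perm (Fin n)) (i : ℕ) (h : i < n) :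
    vv n σ i = zz ((σ ⟨i, h⟩ : ℕ)) := dif_pos h

lemma vv_eq (σ : Equiv.Perm (Fin n)) (i : Fin n) :
    vv n σ (i : ℕ) = zz ((σ i : ℕ)) := by
  rw [vv_nat σ (i : ℕ) i.isLt]

lemma vv_ne (σ : Equiv.Perm (Fin n)) (i : ℕ) (h : i < n) : vv n σ i ≠ 0 := by
  rw [vv_nat σ i h]
  exact zz_ne_zero _

lemma sigma_val_ne (σ : Equiv.Perm (Fin n)) {i j : Fin n} (h : i ≠ j) :
    ((σ i : ℕ)) ≠ ((σ j : ℕ)) := by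
  intro hc
  exact h (σ.injective (Fin.val_injective hc))

/-- the generic product of all z's -/
noncomputable def PZ (n : ℕ) : FF := ∏ i : Fin n, zz (i : ℕ)

lemma PZ_ne_zero : PZ n ≠ 0 := by
  rw [PZ]
  exact Finset.prod_ne_zero_iff.2 fun i _ => zz_ne_zero _

lemma prodV (σ : Equiv.Perm (Fin n)) : ∏ i : Fin n, zz ((σ i : ℕ)) = PZ n :=
  Equiv.prod_comp σ (fun i : Fin n => zz (i : ℕ))

/-- (F2): the monomial part -/
lemma monomial_part (hn : 0 < n) (d : ℤ) (σ : Equiv.Perm (Fin n)) :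
    ∏ i ∈ Finset.range n, vv n σ i ^ (mex n d i) =
      (∏ i : Fin n, zz ((σ i : ℕ)) ^ eex n d (i : ℕ)) * (PZ n) ^ (-(MM n d : ℤ)) := by
  rw [Finset.prod_range (fun i => vv n σ i ^ (mex n d i))]
  have step : ∀ i : Fin n, vv n σ (i : ℕ) ^ (mex n d (i : ℕ)) =
      zz ((σ i : ℕ)) ^ eex n d (i : ℕ) * zz ((σ i : ℕ)) ^ (-(MM n d : ℤ)) := by
    intro i
    rw [vv_eq]
    have hc := eex_cast hn d (i : ℕ)
    have hm : mex n d (i : ℕ) = (eex n d (i : ℕ) : ℤ) + (-(MM n d : ℤ)) := by omega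
    rw [hm, zpow_add₀ (zz_ne_zero _), zpow_natCast]
  rw [Finset.prod_congr rfl fun i _ => step i, Finset.prod_mul_distrib,
    Finset.prod_zpow, prodV]

/-- (F3): the chain part -/
lemma chain_part (σ : Equiv.Perm (Fin n)) :
    ∏ i ∈ Finset.range (n - 1), (1 - vv n σ (i + 1) / (vv n σ i * q₂)) =
      (∏ i ∈ Finset.range (n - 1), (vv n σ i * q₂ - vv n σ (i + 1))) /
        ((∏ i ∈ Finset.range (n - 1), vv n σ i) * q₂ ^ (n - 1)) := by
  have step : ∀ i ∈ Finset.range (n - 1),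
      1 - vv n σ (i + 1) / (vv n σ i * q₂) =
        (vv n σ i * q₂ - vv n σ (i + 1)) / (vv n σ i * q₂) := by
    intro i hi
    have hi' : i < n - 1 := Finset.mem_range.1 hi
    exact one_sub_div (mul_ne_zero (vv_ne σ i (by omega)) q2_ne_zero)
  rw [Finset.prod_congr rfl step, Finset.prod_div_distrib, Finset.prod_mul_distrib,
    Finset.prod_const, Finset.card_range]

lemma chain_num_ne (σ : Equiv.Perm (Fin n)) :
    (∏ i ∈ Finset.range (n - 1), (vv n σ i * q₂ - vv n σ (i + 1))) ≠ 0 := by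
  refine Finset.prod_ne_zero_iff.2 fun i hi => ?_
  have hi' : i < n - 1 := Finset.mem_range.1 hi
  have h1 : i < n := by omega
  have h2 : i + 1 < n := by omega
  rw [vv_nat σ i h1, vv_nat σ (i + 1) h2]
  refine zzq2_sub_ne (sigma_val_ne σ ?_)
  intro hc
  have := congrArg Fin.val hc
  simp at this

lemma chain_den_ne (σ : Equiv.Perm (Fin n)) :
    (∏ i ∈ Finset.range (n - 1), vv n σ i) ≠ 0 := by
  refine Finset.prod_ne_zero_iff.2 fun i hi => ?_
  have hi' : i < n - 1 := Finset.mem_range.1 hi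
  exact vv_ne σ i (by omega)

/-- (F8): product of V i * V j over pairs -/
lemma pair_mul_part (σ : Equiv.Perm (Fin n)) :
    ∏ i : Fin n, ∏ j ∈ Finset.Ioi i, (zz ((σ i : ℕ)) * zz ((σ j : ℕ))) =
      (PZ n) ^ (n - 1) := by
  have h1 : ∏ i : Fin n, ∏ j ∈ Finset.Ioi i, (zz ((σ i : ℕ)) * zz ((σ j : ℕ))) =
      (∏ i : Fin n, ∏ j ∈ Finset.Ioi i, zz ((σ i : ℕ))) *
        ∏ i : Fin n, ∏ j ∈ Finset.Ioi i, zz ((σ j : ℕ)) := by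
    rw [← Finset.prod_mul_distrib]
    exact Finset.prod_congr rfl fun i _ => Finset.prod_mul_distrib
  have h2 : (∏ i : Fin n, ∏ j ∈ Finset.Ioi i, zz ((σ i : ℕ))) =
      ∏ i : Fin n, zz ((σ i : ℕ)) ^ (n - 1 - (i : ℕ)) := by
    refine Finset.prod_congr rfl fun i _ => ?_
    rw [Finset.prod_const, Fin.card_Ioi]
  have h3 : (∏ i : Fin n, ∏ j ∈ Finset.Ioi i, zz ((σ j : ℕ))) =
      ∏ j : Fin n, zz ((σ j : ℕ)) ^ (j : ℕ) := by
    rw [Finset.prod_comm' (t' := Finset.univ) (s' := fun j => Finset.Iio j)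
      (fun i j => by simp [Finset.mem_Ioi, Finset.mem_Iio, and_comm])]
    refine Finset.prod_congr rfl fun j _ => ?_
    rw [Finset.prod_const, Fin.card_Iio]
  rw [h1, h2, h3, ← Finset.prod_mul_distrib]
  have h4 : ∀ i : Fin n, zz ((σ i : ℕ)) ^ (n - 1 - (i : ℕ)) * zz ((σ i : ℕ)) ^ (i : ℕ) =
      zz ((σ i : ℕ)) ^ (n - 1) := by
    intro i
    rw [← pow_add]
    congr 1
    have := i.isLt
    omega
  rw [Finset.prod_congr rfl fun i _ => h4 i, Finset.prod_pow, prodV]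

end Analytic

section Analytic2

variable {n : ℕ}

/-- (F4a): double product conversion -/
lemma zeta_double_prod (σ : Equiv.Perm (Fin n)) :
    (∏ i ∈ Finset.range n, ∏ j ∈ Finset.range n,
        (if i < j then zeta (vv n σ i / vv n σ j) else 1)) =
      ∏ i : Fin n, ∏ j ∈ Finset.Ioi i, zeta (zz ((σ i : ℕ)) / zz ((σ j : ℕ))) := by
  rw [Finset.prod_range fun i => ∏ j ∈ Finset.range n,
    (if i < j then zeta (vv n σ i / vv n σ j) else 1)]
  refine Finset.prod_congr rfl fun i _ => ?_
  rw [Finset.prod_range fun j => (if (i : ℕ) < j then zeta (vv n σ (i : ℕ) / vv n σ j) else 1)]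
  have h1 : ∀ j : Fin n, (if (i : ℕ) < (j : ℕ) then zeta (vv n σ (i : ℕ) / vv n σ (j : ℕ)) else 1)
      = (if i < j then zeta (zz ((σ i : ℕ)) / zz ((σ j : ℕ))) else 1) := by
    intro j
    rw [vv_eq, vv_eq]
    congr 1
  rw [Finset.prod_congr rfl fun j _ => h1 j]
  rw [← Finset.prod_subset (Finset.subset_univ (Finset.Ioi i)) (fun j _ hj => by
    rw [if_neg (by simpa using hj)])]
  exact Finset.prod_congr rfl fun j hj => if_pos (Finset.mem_Ioi.1 hj)

/-- (F4): the zeta part in cleared form -/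
lemma zeta_part (σ : Equiv.Perm (Fin n)) :
    (∏ i ∈ Finset.range n, ∏ j ∈ Finset.range n,
        (if i < j then zeta (vv n σ i / vv n σ j) else 1)) =
      (∏ i : Fin n, ∏ j ∈ Finset.Ioi i,
        ((zz ((σ j : ℕ)) - zz ((σ i : ℕ)) * q₁) * (zz ((σ j : ℕ)) - zz ((σ i : ℕ)) * q₂) *
          (zz ((σ i : ℕ)) - q₁ * q₂ * zz ((σ j : ℕ))))) /
      ((PZ n) ^ (n - 1) *
        ∏ i : Fin n, ∏ j ∈ Finset.Ioi i, (zz ((σ j : ℕ)) - zz ((σ i : ℕ)))) := by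
  rw [zeta_double_prod]
  have step : ∀ i : Fin n, ∀ j ∈ Finset.Ioi i,
      zeta (zz ((σ i : ℕ)) / zz ((σ j : ℕ))) =
        ((zz ((σ j : ℕ)) - zz ((σ i : ℕ)) * q₁) * (zz ((σ j : ℕ)) - zz ((σ i : ℕ)) * q₂) *
          (zz ((σ i : ℕ)) - q₁ * q₂ * zz ((σ j : ℕ)))) /
        ((zz ((σ i : ℕ)) * zz ((σ j : ℕ))) * (zz ((σ j : ℕ)) - zz ((σ i : ℕ)))) := by
    intro i j hj
    have hij : i ≠ j := Fin.ne_of_lt (Finset.mem_Ioi.1 hj)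
    exact zeta_frac (zz_ne_zero _) (zz_ne_zero _) (zz_sub_ne (sigma_val_ne σ hij))
  calc (∏ i : Fin n, ∏ j ∈ Finset.Ioi i, zeta (zz ((σ i : ℕ)) / zz ((σ j : ℕ))))
      = ∏ i : Fin n, ∏ j ∈ Finset.Ioi i,
          (((zz ((σ j : ℕ)) - zz ((σ i : ℕ)) * q₁) * (zz ((σ j : ℕ)) - zz ((σ i : ℕ)) * q₂) *
            (zz ((σ i : ℕ)) - q₁ * q₂ * zz ((σ j : ℕ)))) /
          ((zz ((σ i : ℕ)) * zz ((σ j : ℕ))) * (zz ((σ j : ℕ)) - zz ((σ i : ℕ))))) :=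
        Finset.prod_congr rfl fun i _ => Finset.prod_congr rfl fun j hj => step i j hj
    _ = (∏ i : Fin n, ∏ j ∈ Finset.Ioi i,
          ((zz ((σ j : ℕ)) - zz ((σ i : ℕ)) * q₁) * (zz ((σ j : ℕ)) - zz ((σ i : ℕ)) * q₂) *
            (zz ((σ i : ℕ)) - q₁ * q₂ * zz ((σ j : ℕ))))) /
        ∏ i : Fin n, ∏ j ∈ Finset.Ioi i,
          ((zz ((σ i : ℕ)) * zz ((σ j : ℕ))) * (zz ((σ j : ℕ)) - zz ((σ i : ℕ)))) := by
        rw [← Finset.prod_div_distrib]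
        exact Finset.prod_congr rfl fun i _ => Finset.prod_div_distrib _ _
    _ = _ := by
        congr 1
        have : (∏ i : Fin n, ∏ j ∈ Finset.Ioi i,
            ((zz ((σ i : ℕ)) * zz ((σ j : ℕ))) * (zz ((σ j : ℕ)) - zz ((σ i : ℕ))))) =
            (∏ i : Fin n, ∏ j ∈ Finset.Ioi i, (zz ((σ i : ℕ)) * zz ((σ j : ℕ)))) *
            ∏ i : Fin n, ∏ j ∈ Finset.Ioi i, (zz ((σ j : ℕ)) - zz ((σ i : ℕ))) := by
          rw [← Finset.prod_mul_distrib]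
          exact Finset.prod_congr rfl fun i _ => Finset.prod_mul_distrib
        rw [this, pair_mul_part]

/-- (F6): splitting off the subdiagonal of a double product over pairs -/
lemma pair_split (G : ℕ → ℕ → FF) :
    ∏ i : Fin n, ∏ j ∈ Finset.Ioi i, G (i : ℕ) (j : ℕ) =
      (∏ t ∈ Finset.range (n - 1), G t (t + 1)) *
        ∏ i : Fin n, ∏ j ∈ Finset.Ioi i,
          (if (j : ℕ) = (i : ℕ) + 1 then 1 else G (i : ℕ) (j : ℕ)) := by
  have inner : ∀ i : Fin n, ∏ j ∈ Finset.Ioi i, G (i : ℕ) (j : ℕ) =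
      (if (i : ℕ) + 1 < n then G (i : ℕ) ((i : ℕ) + 1) else 1) *
        ∏ j ∈ Finset.Ioi i, (if (j : ℕ) = (i : ℕ) + 1 then 1 else G (i : ℕ) (j : ℕ)) := by
    intro i
    have hsplit : ∀ j ∈ Finset.Ioi i, G (i : ℕ) (j : ℕ) =
        (if (j : ℕ) = (i : ℕ) + 1 then G (i : ℕ) (j : ℕ) else 1) *
          (if (j : ℕ) = (i : ℕ) + 1 then 1 else G (i : ℕ) (j : ℕ)) := by
      intro j _
      split_ifs <;> simp
    rw [Finset.prod_congr rfl hsplit, Finset.prod_mul_distrib]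
    congr 1
    by_cases h : (i : ℕ) + 1 < n
    · rw [if_pos h]
      rw [Finset.prod_eq_single_of_mem (⟨(i : ℕ) + 1, h⟩ : Fin n)
        (Finset.mem_Ioi.2 (by rw [Fin.lt_def]; simp))
        (fun b _ hb => if_neg (fun hc => hb (Fin.ext hc)))]
      rw [if_pos rfl]
    · rw [if_neg h]
      refine Finset.prod_eq_one fun j hj => ?_
      have h1 : i < j := Finset.mem_Ioi.1 hj
      have h1' : (i : ℕ) < (j : ℕ) := h1
      have h2 : (j : ℕ) < n := j.isLt
      rw [if_neg (by omega)]
  rw [Finset.prod_congr rfl fun i _ => inner i, Finset.prod_mul_distrib]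
  congr 1
  symm
  rw [← Finset.prod_range fun t => if t + 1 < n then G t (t + 1) else 1]
  have h5 : ∏ t ∈ Finset.range n, (if t + 1 < n then G t (t + 1) else 1) =
      ∏ t ∈ Finset.range (n - 1), (if t + 1 < n then G t (t + 1) else 1) :=
    (Finset.prod_subset (Finset.range_subset_range.2 (by omega)) (fun x hx hnx =>
      if_neg (by rw [Finset.mem_range] at hx hnx; omega))).symm
  rw [h5]
  refine Finset.prod_congr rfl fun t ht => ?_
  rw [Finset.mem_range] at ht
  exact (if_pos (by omega)).symm

end Analytic2

section Analytic3

variable {n : ℕ}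

/-- (F5a) -/
lemma Phi_rename (σ : Equiv.Perm (Fin n)) (P : B n) :
    Phi n (MvPolynomial.rename (⇑σ) P) =
      eval₂Hom phiq (fun i : Fin n => zz ((σ i : ℕ))) P := by
  have hcomp : (Phi n).comp (MvPolynomial.rename (⇑σ)).toRingHom =
      eval₂Hom phiq (fun i : Fin n => zz ((σ i : ℕ))) := by
    apply MvPolynomial.ringHom_ext
    · intro r
      simp [Phi]
    · intro i
      simp [Phi]
  exact DFunLike.congr_fun hcomp P

/-- (F5): the Vandermonde in the permuted variables -/
lemma VD_eq (σ : Equiv.Perm (Fin n)) :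
    ∏ i : Fin n, ∏ j ∈ Finset.Ioi i, (zz ((σ j : ℕ)) - zz ((σ i : ℕ))) =
      ((Equiv.Perm.sign σ : ℤ) : FF) * Phi n (Van n) := by
  have h1 : eval₂Hom phiq (fun i : Fin n => zz ((σ i : ℕ))) (Van n) =
      ∏ i : Fin n, ∏ j ∈ Finset.Ioi i, (zz ((σ j : ℕ)) - zz ((σ i : ℕ))) := by
    rw [Van, map_prod]
    refine Finset.prod_congr rfl fun i _ => ?_
    rw [map_prod]
    refine Finset.prod_congr rfl fun j _ => ?_
    rw [map_sub, MvPolynomial.eval₂Hom_X', MvPolynomial.eval₂Hom_X']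
  rw [← h1, ← Phi_rename, rename_Van, map_mul, map_intCast]

lemma VD_ne_zero (σ : Equiv.Perm (Fin n)) :
    (∏ i : Fin n, ∏ j ∈ Finset.Ioi i, (zz ((σ j : ℕ)) - zz ((σ i : ℕ)))) ≠ 0 := by
  refine Finset.prod_ne_zero_iff.2 fun i _ => Finset.prod_ne_zero_iff.2 fun j hj => ?_
  exact zz_sub_ne (sigma_val_ne σ (Fin.ne_of_lt (Finset.mem_Ioi.1 hj)))

lemma sFF_sq (σ : Equiv.Perm (Fin n)) :
    ((Equiv.Perm.sign σ : ℤ) : FF) * ((Equiv.Perm.sign σ : ℤ) : FF) = 1 := by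
  rcases Int.units_eq_one_or (Equiv.Perm.sign σ) with h | h <;> rw [h] <;> norm_num

lemma sFF_ne (σ : Equiv.Perm (Fin n)) : ((Equiv.Perm.sign σ : ℤ) : FF) ≠ 0 := by
  intro h
  have := sFF_sq σ
  rw [h, mul_zero] at this
  exact zero_ne_one this

/-- (F7): the evaluation of the numerator polynomial -/
lemma Phi_numer (d : ℤ) (σ : Equiv.Perm (Fin n)) :
    Phi n (numer n d σ) =
      (∏ i ∈ Finset.univ.filter (fun i : Fin n => (i : ℕ) < n - 1), zz ((σ i : ℕ))) *
      (∏ i : Fin n, zz ((σ i : ℕ)) ^ eex n d (i : ℕ)) *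
      ∏ i : Fin n, ∏ j ∈ Finset.Ioi i,
        ((zz ((σ j : ℕ)) - q₁ * zz ((σ i : ℕ))) *
         (zz ((σ i : ℕ)) - (q₁ * q₂) * zz ((σ j : ℕ))) *
         (if (j : ℕ) = (i : ℕ) + 1 then 1 else (zz ((σ j : ℕ)) - q₂ * zz ((σ i : ℕ))))) := by
  unfold numer pairP
  rw [map_mul, map_mul, map_prod, map_prod, map_prod]
  congr 1
  · congr 1
    · exact Finset.prod_congr rfl fun i _ => by rw [Phi_X]
    · exact Finset.prod_congr rfl fun i _ => by rw [map_pow, Phi_X]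
  · refine Finset.prod_congr rfl fun i _ => ?_
    rw [map_prod]
    refine Finset.prod_congr rfl fun j _ => ?_
    simp only [map_mul, map_sub, map_one, Phi_X, Phi_C, phiq_q1, phiq_q2,
      apply_ite (Phi n)]

/-- the subdiagonal product, with signs -/
lemma subdiag_neg (σ : Equiv.Perm (Fin n)) :
    (∏ t ∈ Finset.range (n - 1), (vv n σ (t + 1) - vv n σ t * q₂)) =
      (-1 : FF) ^ (n - 1) *
        ∏ t ∈ Finset.range (n - 1), (vv n σ t * q₂ - vv n σ (t + 1)) := by
  have step : ∀ t ∈ Finset.range (n - 1), vv n σ (t + 1) - vv n σ t * q₂ =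
      (-1) * (vv n σ t * q₂ - vv n σ (t + 1)) := by
    intro t _
    ring
  rw [Finset.prod_congr rfl step, Finset.prod_mul_distrib, Finset.prod_const,
    Finset.card_range]

/-- (F4b): splitting the q₂ factors -/
lemma q2_pair_split (σ : Equiv.Perm (Fin n)) :
    ∏ i : Fin n, ∏ j ∈ Finset.Ioi i, (zz ((σ j : ℕ)) - zz ((σ i : ℕ)) * q₂) =
      ((-1 : FF) ^ (n - 1) *
        ∏ t ∈ Finset.range (n - 1), (vv n σ t * q₂ - vv n σ (t + 1))) *
      ∏ i : Fin n, ∏ j ∈ Finset.Ioi i,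
        (if (j : ℕ) = (i : ℕ) + 1 then 1
         else (zz ((σ j : ℕ)) - zz ((σ i : ℕ)) * q₂)) := by
  have h0 : ∏ i : Fin n, ∏ j ∈ Finset.Ioi i, (zz ((σ j : ℕ)) - zz ((σ i : ℕ)) * q₂) =
      ∏ i : Fin n, ∏ j ∈ Finset.Ioi i,
        (fun a b => vv n σ b - vv n σ a * q₂) (i : ℕ) (j : ℕ) := by
    refine Finset.prod_congr rfl fun i _ => Finset.prod_congr rfl fun j _ => ?_
    show zz ((σ j : ℕ)) - zz ((σ i : ℕ)) * q₂ = vv n σ (j : ℕ) - vv n σ (i : ℕ) * q₂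
    rw [vv_eq, vv_eq]
  rw [h0, pair_split (fun a b => vv n σ b - vv n σ a * q₂), subdiag_neg]
  congr 1
  refine Finset.prod_congr rfl fun i _ => Finset.prod_congr rfl fun j _ => ?_
  by_cases h : (j : ℕ) = (i : ℕ) + 1
  · rw [if_pos h, if_pos h]
  · rw [if_neg h, if_neg h, vv_eq, vv_eq]

end Analytic3

section Assembly

variable {n : ℕ}

/-- (F9) -/
lemma filter_prod (σ : Equiv.Perm (Fin n)) :
    (∏ i ∈ Finset.univ.filter (fun i : Fin n => (i : ℕ) < n - 1), zz ((σ i : ℕ))) =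
      ∏ t ∈ Finset.range (n - 1), vv n σ t := by
  rw [Finset.prod_filter]
  have h1 : ∀ i : Fin n, (if (i : ℕ) < n - 1 then zz ((σ i : ℕ)) else 1) =
      (fun t : ℕ => if t < n - 1 then vv n σ t else 1) (i : ℕ) := by
    intro i
    show _ = if (i : ℕ) < n - 1 then vv n σ (i : ℕ) else 1
    rw [vv_eq]
  rw [Finset.prod_congr rfl fun i _ => h1 i,
    ← Finset.prod_range fun t => if t < n - 1 then vv n σ t else 1]
  rw [← Finset.prod_subset (Finset.range_subset_range.2 (by omega : n - 1 ≤ n))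
    (fun x _ hnx => if_neg (by rw [Finset.mem_range] at hnx; omega))]
  exact Finset.prod_congr rfl fun t ht =>
    if_pos (Finset.mem_range.1 ht)

/-- the per-permutation identity -/
lemma term_eq (hn : 0 < n) (d : ℤ) (σ : Equiv.Perm (Fin n)) :
    (∏ i ∈ Finset.range n,
        vv n σ i ^ (Int.fdiv (((i : ℤ) + 1) * d) n - Int.fdiv ((i : ℤ) * d) n)) /
      (∏ i ∈ Finset.range (n - 1), (1 - vv n σ (i + 1) / (vv n σ i * q₂))) *
    (∏ i ∈ Finset.range n, ∏ j ∈ Finset.range n,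
      (if i < j then zeta (vv n σ i / vv n σ j) else 1)) =
    (-1 : FF) ^ (n - 1) * q₂ ^ (n - 1) * (PZ n) ^ (-(((n - 1) + MM n d : ℕ) : ℤ)) *
      ((Equiv.Perm.sign σ : ℤ) : FF) * Phi n (numer n d σ) / Phi n (Van n) := by
  have hmex : ∀ i : ℕ, Int.fdiv (((i : ℤ) + 1) * d) n - Int.fdiv ((i : ℤ) * d) n
      = mex n d i := fun i => rfl
  simp only [hmex]
  rw [monomial_part hn d σ, chain_part σ, zeta_part σ, Phi_numer d σ, filter_prod σ]
  -- names for the atoms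
  have hZN : (∏ i : Fin n, ∏ j ∈ Finset.Ioi i,
      ((zz ((σ j : ℕ)) - zz ((σ i : ℕ)) * q₁) * (zz ((σ j : ℕ)) - zz ((σ i : ℕ)) * q₂) *
        (zz ((σ i : ℕ)) - q₁ * q₂ * zz ((σ j : ℕ))))) =
      (∏ i : Fin n, ∏ j ∈ Finset.Ioi i,
        ((zz ((σ j : ℕ)) - zz ((σ i : ℕ)) * q₁) *
          (zz ((σ i : ℕ)) - q₁ * q₂ * zz ((σ j : ℕ))))) *
      (((-1 : FF) ^ (n - 1) *
        ∏ t ∈ Finset.range (n - 1), (vv n σ t * q₂ - vv n σ (t + 1))) *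
      ∏ i : Fin n, ∏ j ∈ Finset.Ioi i,
        (if (j : ℕ) = (i : ℕ) + 1 then 1
         else (zz ((σ j : ℕ)) - zz ((σ i : ℕ)) * q₂))) := by
    have h1 : ∀ i : Fin n, ∀ j ∈ Finset.Ioi i,
        ((zz ((σ j : ℕ)) - zz ((σ i : ℕ)) * q₁) * (zz ((σ j : ℕ)) - zz ((σ i : ℕ)) * q₂) *
          (zz ((σ i : ℕ)) - q₁ * q₂ * zz ((σ j : ℕ)))) =
        ((zz ((σ j : ℕ)) - zz ((σ i : ℕ)) * q₁) *
          (zz ((σ i : ℕ)) - q₁ * q₂ * zz ((σ j : ℕ)))) *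
        (zz ((σ j : ℕ)) - zz ((σ i : ℕ)) * q₂) := by
      intro i j _
      ring
    rw [Finset.prod_congr rfl fun i _ => Finset.prod_congr rfl fun j hj => h1 i j hj]
    have h2 : ∀ i : Fin n, (∏ j ∈ Finset.Ioi i,
        (((zz ((σ j : ℕ)) - zz ((σ i : ℕ)) * q₁) *
          (zz ((σ i : ℕ)) - q₁ * q₂ * zz ((σ j : ℕ)))) *
        (zz ((σ j : ℕ)) - zz ((σ i : ℕ)) * q₂))) =
        (∏ j ∈ Finset.Ioi i, ((zz ((σ j : ℕ)) - zz ((σ i : ℕ)) * q₁) *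
          (zz ((σ i : ℕ)) - q₁ * q₂ * zz ((σ j : ℕ))))) *
        ∏ j ∈ Finset.Ioi i, (zz ((σ j : ℕ)) - zz ((σ i : ℕ)) * q₂) :=
      fun i => Finset.prod_mul_distrib
    rw [Finset.prod_congr rfl fun i _ => h2 i, Finset.prod_mul_distrib, q2_pair_split σ]
  have hNP : (∏ i : Fin n, ∏ j ∈ Finset.Ioi i,
      ((zz ((σ j : ℕ)) - q₁ * zz ((σ i : ℕ))) *
       (zz ((σ i : ℕ)) - (q₁ * q₂) * zz ((σ j : ℕ))) *
       (if (j : ℕ) = (i : ℕ) + 1 then 1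
        else (zz ((σ j : ℕ)) - q₂ * zz ((σ i : ℕ)))))) =
      (∏ i : Fin n, ∏ j ∈ Finset.Ioi i,
        ((zz ((σ j : ℕ)) - zz ((σ i : ℕ)) * q₁) *
          (zz ((σ i : ℕ)) - q₁ * q₂ * zz ((σ j : ℕ))))) *
      ∏ i : Fin n, ∏ j ∈ Finset.Ioi i,
        (if (j : ℕ) = (i : ℕ) + 1 then 1
         else (zz ((σ j : ℕ)) - zz ((σ i : ℕ)) * q₂)) := by
    have h1 : ∀ i : Fin n, ∀ j ∈ Finset.Ioi i,
        ((zz ((σ j : ℕ)) - q₁ * zz ((σ i : ℕ))) *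
         (zz ((σ i : ℕ)) - (q₁ * q₂) * zz ((σ j : ℕ))) *
         (if (j : ℕ) = (i : ℕ) + 1 then 1
          else (zz ((σ j : ℕ)) - q₂ * zz ((σ i : ℕ))))) =
        ((zz ((σ j : ℕ)) - zz ((σ i : ℕ)) * q₁) *
          (zz ((σ i : ℕ)) - q₁ * q₂ * zz ((σ j : ℕ)))) *
        (if (j : ℕ) = (i : ℕ) + 1 then 1
         else (zz ((σ j : ℕ)) - zz ((σ i : ℕ)) * q₂)) := by
      intro i j _
      split_ifs <;> ring
    rw [Finset.prod_congr rfl fun i _ => Finset.prod_congr rfl fun j hj => h1 i j hj]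
    have h2 : ∀ i : Fin n, (∏ j ∈ Finset.Ioi i,
        (((zz ((σ j : ℕ)) - zz ((σ i : ℕ)) * q₁) *
          (zz ((σ i : ℕ)) - q₁ * q₂ * zz ((σ j : ℕ)))) *
        (if (j : ℕ) = (i : ℕ) + 1 then 1
         else (zz ((σ j : ℕ)) - zz ((σ i : ℕ)) * q₂)))) =
        (∏ j ∈ Finset.Ioi i, ((zz ((σ j : ℕ)) - zz ((σ i : ℕ)) * q₁) *
          (zz ((σ i : ℕ)) - q₁ * q₂ * zz ((σ j : ℕ))))) *
        ∏ j ∈ Finset.Ioi i, (if (j : ℕ) = (i : ℕ) + 1 then 1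
          else (zz ((σ j : ℕ)) - zz ((σ i : ℕ)) * q₂)) :=
      fun i => Finset.prod_mul_distrib
    rw [Finset.prod_congr rfl fun i _ => h2 i, Finset.prod_mul_distrib]
  have hPV : Phi n (Van n) = ((Equiv.Perm.sign σ : ℤ) : FF) *
      ∏ i : Fin n, ∏ j ∈ Finset.Ioi i, (zz ((σ j : ℕ)) - zz ((σ i : ℕ))) := by
    rw [VD_eq σ, ← mul_assoc, sFF_sq σ, one_mul]
  rw [hZN, hNP, hPV]
  have hz1 : (PZ n) ^ (-(MM n d : ℤ)) = ((PZ n) ^ (MM n d))⁻¹ := by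
    rw [zpow_neg, zpow_natCast]
  have hz2 : (PZ n) ^ (-(((n - 1) + MM n d : ℕ) : ℤ)) =
      ((PZ n) ^ (n - 1) * (PZ n) ^ (MM n d))⁻¹ := by
    rw [zpow_neg, zpow_natCast, pow_add]
  rw [hz1, hz2]
  have hX : (PZ n) ^ (MM n d) ≠ 0 := pow_ne_zero _ PZ_ne_zero
  have hY : (PZ n) ^ (n - 1) ≠ 0 := pow_ne_zero _ PZ_ne_zero
  have hQ : q₂ ^ (n - 1) ≠ 0 := pow_ne_zero _ q2_ne_zero
  have hCN := chain_num_ne σ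
  have hPR := chain_den_ne σ
  have hVD := VD_ne_zero σ
  have hs := sFF_ne σ
  generalize (∏ i : Fin n, ∏ j ∈ Finset.Ioi i,
    ((zz ((σ j : ℕ)) - zz ((σ i : ℕ)) * q₁) * (zz ((σ i : ℕ)) - q₁ * q₂ * zz ((σ j : ℕ))))) = A
  field_simp
  ring

end Assembly

lemma symH_eq {n : ℕ} (hn : 0 < n) (d : ℤ) :
    symH n d = (-1 : FF) ^ (n - 1) * q₂ ^ (n - 1) *
      (PZ n) ^ (-(((n - 1) + MM n d : ℕ) : ℤ)) * Phi n (hpoly n d) := by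
  rw [symH, Finset.sum_congr rfl fun σ _ => term_eq hn d σ]
  have hsum : ∑ σ : Equiv.Perm (Fin n),
      ((Equiv.Perm.sign σ : ℤ) : FF) * Phi n (numer n d σ) =
      Phi n (Van n) * Phi n (hpoly n d) := by
    rw [← map_mul, ← GG_eq_Van_mul, GG, map_sum]
    exact Finset.sum_congr rfl fun σ _ => by rw [map_mul, map_intCast]
  have h2 : ∀ σ : Equiv.Perm (Fin n),
      (-1 : FF) ^ (n - 1) * q₂ ^ (n - 1) *
        (PZ n) ^ (-(((n - 1) + MM n d : ℕ) : ℤ)) *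
        ((Equiv.Perm.sign σ : ℤ) : FF) * Phi n (numer n d σ) / Phi n (Van n) =
      ((-1 : FF) ^ (n - 1) * q₂ ^ (n - 1) *
        (PZ n) ^ (-(((n - 1) + MM n d : ℕ) : ℤ))) *
        (((Equiv.Perm.sign σ : ℤ) : FF) * Phi n (numer n d σ)) / Phi n (Van n) := by
    intro σ
    ring
  rw [Finset.sum_congr rfl fun σ _ => h2 σ, ← Finset.sum_div, ← Finset.mul_sum, hsum]
  rw [mul_comm (Phi n (Van n)) (Phi n (hpoly n d)), ← mul_assoc,
    mul_div_assoc, div_self (Phi_Van_ne_zero n), mul_one]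

end St13


theorem statement13 (n : ℕ) (hn : 1 ≤ n) (d : ℤ) :
    ∃ c : (Fin n → ℤ) →₀ FF, HasLqCoeffs c ∧ IsSymmC c ∧
      evalC c (fun i => zz i) = symH n d := by
  classical
  have hn0 : 0 < n := hn
  set u : Fin n → ℤ := fun _ => -(((n - 1) + St13.MM n d : ℕ) : ℤ) with hu
  set r : FF := (-1 : FF) ^ (n - 1) * q₂ ^ (n - 1) with hr
  set c : (Fin n → ℤ) →₀ FF :=
    (AddMonoidAlgebra.single u r * St13.psi n (St13.hpoly n d) : St13.AMA n).coeff with hc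
  refine ⟨c, ?_, ?_, ?_⟩
  · -- coefficients in Lq
    intro m _
    have happ : c m = r * (St13.psi n (St13.hpoly n d)).coeff (-u + m) := by
      rw [hc]
      exact AddMonoidAlgebra.coeff_single_mul_apply _ r u m
    rw [happ]
    refine mul_mem ?_ (St13.psi_mem_Lcoef _ _)
    exact mul_mem (pow_mem (neg_mem (one_mem Lq)) _) (pow_mem St13.q2_mem_Lq _)
  · -- symmetry
    intro σ m
    have hperm : St13.permHom n σ (AddMonoidAlgebra.single u r * St13.psi n (St13.hpoly n d)) =
          AddMonoidAlgebra.single u r * St13.psi n (St13.hpoly n d) := by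
      rw [map_mul, St13.permHom_single, St13.permHom_psi, St13.rename_hpoly]
      rfl
    calc c (m ∘ σ) = (St13.permHom n σ (AddMonoidAlgebra.single u r * St13.psi n (St13.hpoly n d))).coeff m :=
          (St13.permHom_apply σ _ m).symm
      _ = c m := by rw [hperm]
  · -- evaluation
    rw [St13.evalC_eq_EE, hc, AddMonoidAlgebra.ofCoeff_coeff, map_mul, St13.EE_single, St13.EE_psi_eq_Phi,
      St13.symH_eq hn0 d]
    have hzu : ∏ i : Fin n, zz (i : ℕ) ^ (u i) =
        (St13.PZ n) ^ (-(((n - 1) + St13.MM n d : ℕ) : ℤ)) := by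
      rw [hu, Finset.prod_zpow]
      rfl
    rw [hzu, hr]

end
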